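/- Let A ∈ ℝⁿˣⁿ be Metzler with zero row sums. Then along any solution x of ẋ = Ax, the function Ṽ(x) = maxᵢ xᵢ - minᵢ xᵢ is non-increasing. -/

import Mathlib

open Matrix NormedSpace

variable {n : ℕ}

attribute [local instance] Matrix.linftyOpNormedRing Matrix.linftyOpNormedAlgebra

-- evaluation of entry as CLM
noncomputable def entryCLM (i j : Fin n) : Matrix (Fin n) (Fin n) ℝ →L[ℝ] ℝ :=
  LinearMap.toContinuousLinearMap
    { toFun := fun M => M i j
      map_add' := fun M N => rfl
      map_smul' := fun c M => rfl }

noncomputable def mulVecCLM (v : Fin n → ℝ) : Matrix (Fin n) (Fin n) ℝ →L[ℝ] (Fin n → ℝ) :=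
  LinearMap.toContinuousLinearMap
    { toFun := fun M => M.mulVec v
      map_add' := fun M N => Matrix.add_mulVec M N v
      map_smul' := fun c M => Matrix.smul_mulVec c M v }

lemma exp_entry_nonneg (M : Matrix (Fin n) (Fin n) ℝ) (hM : ∀ i j, 0 ≤ M i j)
    (i j : Fin n) : 0 ≤ exp M i j := by
  have hpow : ∀ k : ℕ, ∀ i j, 0 ≤ (M ^ k) i j := by
    intro k
    induction k with
    | zero => intro i j; simp [Matrix.one_apply]; positivity
    | succ k ih =>
      intro i j
      rw [pow_succ, Matrix.mul_apply]
      exact Finset.sum_nonneg fun l _ => mul_nonneg (ih i l) (hM l j)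
  have h := (exp_series_hasSum_exp' (𝕂 := ℝ) M).mapL (entryCLM i j)
  have hval : ∀ k : ℕ, entryCLM i j ((k.factorial : ℝ)⁻¹ • M ^ k)
      = (k.factorial : ℝ)⁻¹ * (M ^ k) i j := fun k => rfl
  have : exp M i j = ∑' k : ℕ, (k.factorial : ℝ)⁻¹ * (M ^ k) i j := by
    have := h.tsum_eq
    simp only [hval] at this
    exact this.symm
  rw [this]
  exact tsum_nonneg fun k => mul_nonneg (by positivity) (hpow k i j)


lemma smul_one_exp (r : ℝ) :
    exp (r • (1 : Matrix (Fin n) (Fin n) ℝ)) = Real.exp r • (1 : Matrix (Fin n) (Fin n) ℝ) := by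
  have hcomm : exp (algebraMap ℝ (Matrix (Fin n) (Fin n) ℝ) r)
      = algebraMap ℝ (Matrix (Fin n) (Fin n) ℝ) (exp r) :=
    (algebraMap_exp_comm (𝕂 := ℝ) (𝔸 := Matrix (Fin n) (Fin n) ℝ) r).symm
  rw [← Algebra.algebraMap_eq_smul_one, hcomm, Real.exp_eq_exp_ℝ,
    Algebra.algebraMap_eq_smul_one]

lemma exp_metzler_nonneg (A : Matrix (Fin n) (Fin n) ℝ)
    (hMetzler : ∀ i j, i ≠ j → 0 ≤ A i j) {τ : ℝ} (hτ : 0 ≤ τ) (i j : Fin n) :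
    0 ≤ exp (τ • A) i j := by
  set c : ℝ := ∑ k, |A k k| with hc
  have hcnn : ∀ k, |A k k| ≤ c := fun k =>
    Finset.single_le_sum (f := fun k => |A k k|) (fun k _ => abs_nonneg _) (Finset.mem_univ k)
  set B : Matrix (Fin n) (Fin n) ℝ := A + c • (1 : Matrix (Fin n) (Fin n) ℝ) with hB
  have hBnn : ∀ i j, 0 ≤ B i j := by
    intro i j
    rcases eq_or_ne i j with rfl | hij
    · have := hcnn i
      simp only [hB, Matrix.add_apply, Matrix.smul_apply, Matrix.one_apply_eq, smul_eq_mul,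
        mul_one]
      linarith [neg_abs_le (A i i)]
    · simpa [hB, Matrix.one_apply_ne hij] using hMetzler i j hij
  have hsplit : τ • A = (-(τ * c)) • (1 : Matrix (Fin n) (Fin n) ℝ) + τ • B := by
    simp [hB, smul_add, smul_smul]
  have hcomm : Commute ((-(τ * c)) • (1 : Matrix (Fin n) (Fin n) ℝ)) (τ • B) :=
    ((Commute.one_left (τ • B)).smul_left _)
  have hexp : exp ((-(τ * c)) • (1 : Matrix (Fin n) (Fin n) ℝ) + τ • B)
      = exp ((-(τ * c)) • (1 : Matrix (Fin n) (Fin n) ℝ)) * exp (τ • B) :=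
    NormedSpace.exp_add_of_commute hcomm
  rw [hsplit, hexp, smul_one_exp]
  rw [Matrix.smul_mul, Matrix.one_mul, Matrix.smul_apply, smul_eq_mul]
  exact mul_nonneg (Real.exp_nonneg _) (exp_entry_nonneg _ (fun i j => by
    exact smul_nonneg hτ (hBnn i j)) i j)

lemma exp_mulVec_one (A : Matrix (Fin n) (Fin n) ℝ)
    (hrows : A.mulVec (fun _ => 1) = 0) (τ : ℝ) :
    (exp (τ • A)).mulVec (fun _ => 1) = (fun _ => 1) := by
  have h := (exp_series_hasSum_exp' (𝕂 := ℝ) (τ • A)).mapL (mulVecCLM (fun _ => 1))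
  have hzero : ∀ k : ℕ, k ≠ 0 →
      (mulVecCLM (n := n) (fun _ => 1)) ((k.factorial : ℝ)⁻¹ • (τ • A) ^ k) = 0 := by
    intro k hk
    obtain ⟨m, rfl⟩ := Nat.exists_eq_succ_of_ne_zero hk
    show (((m + 1).factorial : ℝ)⁻¹ • ((τ • A) ^ (m + 1))).mulVec (fun _ => 1) = 0
    rw [Matrix.smul_mulVec, pow_succ, ← Matrix.mulVec_mulVec]
    have : (τ • A).mulVec (fun _ => 1) = 0 := by
      rw [Matrix.smul_mulVec, hrows, smul_zero]
    rw [this, Matrix.mulVec_zero, smul_zero]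
  have hsingle : HasSum
      (fun k : ℕ => (mulVecCLM (n := n) (fun _ => 1)) ((k.factorial : ℝ)⁻¹ • (τ • A) ^ k))
      ((mulVecCLM (n := n) (fun _ => 1)) ((Nat.factorial 0 : ℝ)⁻¹ • (τ • A) ^ 0)) :=
    hasSum_single 0 hzero
  have := hsingle.unique h
  have h0 : (mulVecCLM (n := n) (fun _ => 1)) ((Nat.factorial 0 : ℝ)⁻¹ • (τ • A) ^ 0)
      = (fun _ => 1) := by
    show ((Nat.factorial 0 : ℝ)⁻¹ • ((τ • A) ^ 0)).mulVec (fun _ => 1) = _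
    simp [Matrix.one_mulVec]
  rw [h0] at this
  exact this.symm

lemma repr_sol (A : Matrix (Fin n) (Fin n) ℝ) (x : ℝ → Fin n → ℝ)
    (hx : ∀ t : ℝ, HasDerivAt x (A.mulVec (x t)) t) (s t : ℝ) (hst : s ≤ t) :
    x t = (exp ((t - s) • A)).mulVec (x s) := by
  set g : ℝ → Fin n → ℝ := fun u => (exp ((u - s) • A)).mulVec (x s) with hgdef
  have hg : ∀ u : ℝ, HasDerivAt g (A.mulVec (g u)) u := by
    intro u
    have h1 := hasDerivAt_exp_smul_const' (𝕂 := ℝ) A (u - s)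
    have h2 : HasDerivAt (fun r : ℝ => r - s) 1 u := (hasDerivAt_id u).sub_const s
    have h3 : HasDerivAt (fun r : ℝ => exp ((r - s) • A))
        (A * exp ((u - s) • A)) u := by
      have h3' := h1.scomp u h2
      simp only [one_smul] at h3'
      exact h3'
    have h4 := ((mulVecCLM (x s)).hasFDerivAt).comp_hasDerivAt u h3
    have h5 : (mulVecCLM (x s)) (A * exp ((u - s) • A)) = A.mulVec (g u) := by
      show (A * exp ((u - s) • A)).mulVec (x s) = _
      rw [← Matrix.mulVec_mulVec]
    exact h5 ▸ h4
  set L : (Fin n → ℝ) →L[ℝ] (Fin n → ℝ) := LinearMap.toContinuousLinearMap A.mulVecLin with hL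
  have hv : ∀ u : ℝ, LipschitzWith ‖L‖₊ (fun y : Fin n → ℝ => A.mulVec y) := fun u => L.lipschitz
  have heq : Set.EqOn x g (Set.Icc s t) := by
    apply ODE_solution_unique (v := fun _ y => A.mulVec y) hv
    · exact (Continuous.continuousOn (continuous_iff_continuousAt.2 fun u => (hx u).continuousAt))
    · exact fun u _ => (hx u).hasDerivWithinAt
    · exact (Continuous.continuousOn (continuous_iff_continuousAt.2 fun u => (hg u).continuousAt))
    · exact fun u _ => (hg u).hasDerivWithinAt
    · simp [hgdef, Matrix.one_mulVec, exp_zero]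
  exact heq (Set.mem_Icc.2 ⟨hst, le_rfl⟩)

theorem stmt_7 (n : ℕ) (hn : 1 ≤ n) (A : Matrix (Fin n) (Fin n) ℝ)
    (hMetzler : ∀ i j, i ≠ j → 0 ≤ A i j)
    (hrows : A.mulVec (fun _ => 1) = 0)
    (x : ℝ → Fin n → ℝ) (hx : ∀ t : ℝ, HasDerivAt x (A.mulVec (x t)) t) :
    ∀ s t : ℝ, s ≤ t →
      (⨆ i, x t i) - (⨅ i, x t i) ≤ (⨆ i, x s i) - (⨅ i, x s i) := by
  intro s t hst
  haveI : Nonempty (Fin n) := Fin.pos_iff_nonempty.1 hn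
  set P : Matrix (Fin n) (Fin n) ℝ := exp ((t - s) • A) with hP
  have hxt : x t = P.mulVec (x s) := repr_sol A x hx s t hst
  have hPnn : ∀ i j, 0 ≤ P i j := fun i j =>
    exp_metzler_nonneg A hMetzler (sub_nonneg.2 hst) i j
  have hProw : ∀ i, ∑ j, P i j = 1 := by
    intro i
    have := congr_fun (exp_mulVec_one A hrows (t - s)) i
    simpa [Matrix.mulVec, dotProduct] using this
  have hbddA : BddAbove (Set.range (x s)) := (Set.finite_range _).bddAbove
  have hbddB : BddBelow (Set.range (x s)) := (Set.finite_range _).bddBelow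
  have hub : ∀ i, x t i ≤ ⨆ k, x s k := by
    intro i
    have : x t i = ∑ j, P i j * x s j := by
      rw [hxt]; rfl
    rw [this]
    calc ∑ j, P i j * x s j ≤ ∑ j, P i j * (⨆ k, x s k) :=
          Finset.sum_le_sum fun j _ =>
            mul_le_mul_of_nonneg_left (le_ciSup hbddA j) (hPnn i j)
      _ = (∑ j, P i j) * (⨆ k, x s k) := by rw [Finset.sum_mul]
      _ = ⨆ k, x s k := by rw [hProw i, one_mul]
  have hlb : ∀ i, (⨅ k, x s k) ≤ x t i := by
    intro i
    have : x t i = ∑ j, P i j * x s j := by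
      rw [hxt]; rfl
    rw [this]
    calc (⨅ k, x s k) = (∑ j, P i j) * (⨅ k, x s k) := by rw [hProw i, one_mul]
      _ = ∑ j, P i j * (⨅ k, x s k) := by rw [Finset.sum_mul]
      _ ≤ ∑ j, P i j * x s j :=
          Finset.sum_le_sum fun j _ =>
            mul_le_mul_of_nonneg_left (ciInf_le hbddB j) (hPnn i j)
  have h1 : (⨆ i, x t i) ≤ ⨆ i, x s i := ciSup_le hub
  have h2 : (⨅ i, x s i) ≤ ⨅ i, x t i := le_ciInf hlb
  linarith
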